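/- Assume the structure constants are nonnegative. Then for every z ∈ ℝ_+^n × ℝ_+^ν and every integer t_0 ≥ 0, one has W^{t_0}(z) ∈ O^{n,ν} if and only if ϖ(W^{t_0 + 1}(z)) = 0. In particular (t_0 = 0), ϖ(W(z)) = 0 if and only if z ∈ O^{n,ν}. -/
import Mathlib


open Filter

/-- The gonosomic evolution operator `W` on `ℝ^n × ℝ^ν` associated with structure constants
`γ_{ipk}` and `γ̃_{ipr}`: it maps `((x_i), (y_p))` to `((x'_k), (y'_r))` with
`x'_k = Σ_{i,p} γ_{ipk} x_i y_p` and `y'_r = Σ_{i,p} γ̃_{ipr} x_i y_p`. -/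
noncomputable def W {n ν : ℕ} (γ : Fin n → Fin ν → Fin n → ℝ)
    (γ' : Fin n → Fin ν → Fin ν → ℝ)
    (z : (Fin n → ℝ) × (Fin ν → ℝ)) : (Fin n → ℝ) × (Fin ν → ℝ) :=
  (fun k => ∑ i, ∑ p, γ i p k * z.1 i * z.2 p,
   fun r => ∑ i, ∑ p, γ' i p r * z.1 i * z.2 p)

/-- The linear form `ϖ(z) = Σ_i x_i + Σ_p y_p` on `ℝ^n × ℝ^ν`. -/
noncomputable def piW {n ν : ℕ} (z : (Fin n → ℝ) × (Fin ν → ℝ)) : ℝ :=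
  ∑ i, z.1 i + ∑ p, z.2 p

/-- `γ_{ip} = Σ_k γ_{ipk}`. -/
noncomputable def gA {n ν : ℕ} (γ : Fin n → Fin ν → Fin n → ℝ)
    (i : Fin n) (p : Fin ν) : ℝ := ∑ k, γ i p k

/-- `γ̃_{ip} = Σ_r γ̃_{ipr}`. -/
noncomputable def gB {n ν : ℕ} (γ' : Fin n → Fin ν → Fin ν → ℝ)
    (i : Fin n) (p : Fin ν) : ℝ := ∑ r, γ' i p r

/-- `σ_{ip} = γ_{ip} + γ̃_{ip}`. -/
noncomputable def σc {n ν : ℕ} (γ : Fin n → Fin ν → Fin n → ℝ)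
    (γ' : Fin n → Fin ν → Fin ν → ℝ) (i : Fin n) (p : Fin ν) : ℝ :=
  gA γ i p + gB γ' i p

/-- The set `O^{n,ν}` of nonnegative points `((x_i),(y_p))` with `x_i y_p = 0` for every
pair `(i,p)` with `σ_{ip} ≠ 0`. -/
def Oset {n ν : ℕ} (γ : Fin n → Fin ν → Fin n → ℝ)
    (γ' : Fin n → Fin ν → Fin ν → ℝ) : Set ((Fin n → ℝ) × (Fin ν → ℝ)) :=
  {z | (∀ i, 0 ≤ z.1 i) ∧ (∀ p, 0 ≤ z.2 p) ∧
    ∀ i p, σc γ γ' i p ≠ 0 → z.1 i * z.2 p = 0}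

/-- The set `S^{n,ν} = S^{n+ν-1} \ O^{n,ν}`, where `S^{n+ν-1}` is the simplex of nonnegative
points with `ϖ(z) = 1`. -/
def Sset {n ν : ℕ} (γ : Fin n → Fin ν → Fin n → ℝ)
    (γ' : Fin n → Fin ν → Fin ν → ℝ) : Set ((Fin n → ℝ) × (Fin ν → ℝ)) :=
  {z | (∀ i, 0 ≤ z.1 i) ∧ (∀ p, 0 ≤ z.2 p) ∧ piW z = 1} \ Oset γ γ'

/-- The normalized gonosomic operator `V(z) = (1/ϖ(W z)) • W z` (junk value when
`ϖ(W z) = 0`, since in `ℝ` we have `0⁻¹ = 0`). -/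
noncomputable def V {n ν : ℕ} (γ : Fin n → Fin ν → Fin n → ℝ)
    (γ' : Fin n → Fin ν → Fin ν → ℝ)
    (z : (Fin n → ℝ) × (Fin ν → ℝ)) : (Fin n → ℝ) × (Fin ν → ℝ) :=
  (piW (W γ γ' z))⁻¹ • W γ γ' z

lemma piW_W_eq {n ν : ℕ} (γ : Fin n → Fin ν → Fin n → ℝ)
    (γ' : Fin n → Fin ν → Fin ν → ℝ) (z : (Fin n → ℝ) × (Fin ν → ℝ)) :
    piW (W γ γ' z) = ∑ i, ∑ p, σc γ γ' i p * (z.1 i * z.2 p) := by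
  simp only [piW, W, σc, gA, gB, add_mul, Finset.sum_mul, Finset.sum_add_distrib]
  congr 1
  · rw [Finset.sum_comm]
    refine Finset.sum_congr rfl fun i _ => ?_
    rw [Finset.sum_comm]
    exact Finset.sum_congr rfl fun p _ => Finset.sum_congr rfl fun k _ => by ring
  · rw [Finset.sum_comm]
    refine Finset.sum_congr rfl fun i _ => ?_
    rw [Finset.sum_comm]
    exact Finset.sum_congr rfl fun p _ => Finset.sum_congr rfl fun r _ => by ring

lemma key_iff {n ν : ℕ} (γ : Fin n → Fin ν → Fin n → ℝ)
    (γ' : Fin n → Fin ν → Fin ν → ℝ)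
    (hγ : ∀ i p k, 0 ≤ γ i p k) (hγ' : ∀ i p r, 0 ≤ γ' i p r)
    (w : (Fin n → ℝ) × (Fin ν → ℝ)) (hw1 : ∀ i, 0 ≤ w.1 i) (hw2 : ∀ p, 0 ≤ w.2 p) :
    piW (W γ γ' w) = 0 ↔ w ∈ Oset γ γ' := by
  have hσ : ∀ i p, 0 ≤ σc γ γ' i p := fun i p => by
    have hA : (0:ℝ) ≤ gA γ i p := Finset.sum_nonneg fun k _ => hγ i p k
    have hB : (0:ℝ) ≤ gB γ' i p := Finset.sum_nonneg fun r _ => hγ' i p r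
    exact add_nonneg hA hB
  have hterm : ∀ i p, 0 ≤ σc γ γ' i p * (w.1 i * w.2 p) := fun i p =>
    mul_nonneg (hσ i p) (mul_nonneg (hw1 i) (hw2 p))
  rw [piW_W_eq]
  constructor
  · intro h
    refine ⟨hw1, hw2, fun i p hip => ?_⟩
    have h1 : ∀ i ∈ (Finset.univ : Finset (Fin n)),
        (0:ℝ) = ∑ p, σc γ γ' i p * (w.1 i * w.2 p) := by
      intro i _
      exact ((Finset.sum_eq_zero_iff_of_nonneg (fun i _ =>
        Finset.sum_nonneg fun p _ => hterm i p)).1 h i (Finset.mem_univ i)).symm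
    have h2 := (Finset.sum_eq_zero_iff_of_nonneg (fun p _ => hterm i p)).1
      (h1 i (Finset.mem_univ i)).symm p (Finset.mem_univ p)
    rcases mul_eq_zero.1 h2 with h3 | h3
    · exact absurd h3 hip
    · exact h3
  · rintro ⟨_, _, h0⟩
    apply Finset.sum_eq_zero; intro i _
    apply Finset.sum_eq_zero; intro p _
    by_cases hip : σc γ γ' i p = 0
    · rw [hip, zero_mul]
    · rw [h0 i p hip, mul_zero]

lemma iter_nonneg {n ν : ℕ} (γ : Fin n → Fin ν → Fin n → ℝ)
    (γ' : Fin n → Fin ν → Fin ν → ℝ)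
    (hγ : ∀ i p k, 0 ≤ γ i p k) (hγ' : ∀ i p r, 0 ≤ γ' i p r)
    (z : (Fin n → ℝ) × (Fin ν → ℝ)) (hz1 : ∀ i, 0 ≤ z.1 i) (hz2 : ∀ p, 0 ≤ z.2 p)
    (t : ℕ) : (∀ i, 0 ≤ ((W γ γ')^[t] z).1 i) ∧ (∀ p, 0 ≤ ((W γ γ')^[t] z).2 p) := by
  induction t with
  | zero => exact ⟨hz1, hz2⟩
  | succ t ih =>
    rw [Function.iterate_succ_apply']
    obtain ⟨ih1, ih2⟩ := ih
    simp only [W]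
    constructor
    · intro k
      exact Finset.sum_nonneg fun i _ => Finset.sum_nonneg fun p _ =>
        mul_nonneg (mul_nonneg (hγ i p k) (ih1 i)) (ih2 p)
    · intro r
      exact Finset.sum_nonneg fun i _ => Finset.sum_nonneg fun p _ =>
        mul_nonneg (mul_nonneg (hγ' i p r) (ih1 i)) (ih2 p)

/-- Suppose the structure constants are nonnegative.  Then for every
nonnegative `z` and every `t₀ ≥ 0`, one has `W^{t₀}(z) ∈ O^{n,ν}` iff `ϖ(W^{t₀+1}(z)) = 0`.
In particular (`t₀ = 0`), `ϖ(W z) = 0` iff `z ∈ O^{n,ν}`. -/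
theorem stmt_14 {n ν : ℕ} (hn : 1 ≤ n) (hν : 1 ≤ ν)
    (γ : Fin n → Fin ν → Fin n → ℝ) (γ' : Fin n → Fin ν → Fin ν → ℝ)
    (hγ : ∀ i p k, 0 ≤ γ i p k) (hγ' : ∀ i p r, 0 ≤ γ' i p r)
    (z : (Fin n → ℝ) × (Fin ν → ℝ)) (hz1 : ∀ i, 0 ≤ z.1 i) (hz2 : ∀ p, 0 ≤ z.2 p) :
    (∀ t₀ : ℕ, (W γ γ')^[t₀] z ∈ Oset γ γ' ↔ piW ((W γ γ')^[t₀ + 1] z) = 0) ∧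
    (piW (W γ γ' z) = 0 ↔ z ∈ Oset γ γ') := by
  constructor
  · intro t₀
    obtain ⟨h1, h2⟩ := iter_nonneg γ γ' hγ hγ' z hz1 hz2 t₀
    rw [Function.iterate_succ_apply']
    exact (key_iff γ γ' hγ hγ' _ h1 h2).symm
  · exact key_iff γ γ' hγ hγ' z hz1 hz2
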